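/- Let A be an array of ℓ(A) cubes of the tiling R_N, and consider the 'reversal of the first and last M entries' permutation sending the configuration [1,2,...,M, M+1,...,ℓ−M, ℓ−M+1,...,ℓ] to [ℓ, ℓ−1,...,ℓ−M+1, M+1,..., ℓ−M, M, M−1,...,1] (M ≤ ℓ/2). Then there exists a sequence of S-elementary movements realizing this permutation with total Shnirelman cost at most √2 · ℓ(A) · √M · N^{-1-ν/2}. -/

import Mathlib

/-- A permutation of `Fin ℓ` consisting of simultaneous disjoint adjacent transpositions. -/
def IsSimulAdjSwaps {ℓ : ℕ} (σ : Equiv.Perm (Fin ℓ)) : Prop :=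
  ∀ i, σ (σ i) = i ∧ (σ i = i ∨ ((σ i : ℕ) = (i : ℕ) + 1) ∨ ((i : ℕ) = (σ i : ℕ) + 1))

/-- The number of pairs simultaneously swapped. -/
def swapCount {ℓ : ℕ} (σ : Equiv.Perm (Fin ℓ)) : ℕ :=
  (Finset.univ.filter fun i => σ i ≠ i).card / 2



def posAux (ℓ M t x : ℕ) : ℕ :=
  if x < M ∨ ℓ - M ≤ x then
    if x % 2 = 0 then min (x + t) (2 * ℓ - 1 - (x + t))
    else max (x - t) (t - x - 1)
  else if 2 * x + 2 ≤ ℓ + M % 2 then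
    x - min M (t - (x - M + 1 - M % 2)) + min M (t - (ℓ - x - (ℓ + M) % 2))
  else
    x + min M (t - (ℓ - M - x - (ℓ + M) % 2)) - min M (t - (x + 1 - M % 2))

theorem spec_midleft (ℓ M t x : ℕ) (hM : 1 ≤ M) (hℓ : 2 * M ≤ ℓ) (hx : x < ℓ) (ht : t < ℓ)
    (h1 : ¬(x < M ∨ ℓ - M ≤ x)) (h3 : 2 * x + 2 ≤ ℓ + M % 2) :
    (t < x - M + 1 - M % 2 ∧ posAux ℓ M t x = x ∧ posAux ℓ M (t+1) x = x) ∨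
    (x - M + 1 - M % 2 ≤ t ∧ t < x - M + 1 - M % 2 + M ∧
      posAux ℓ M t x = x - (t - (x - M + 1 - M % 2)) ∧
      posAux ℓ M (t+1) x = x - (t - (x - M + 1 - M % 2)) - 1) ∨
    (x - M + 1 - M % 2 + M ≤ t ∧ t < ℓ - x - (ℓ + M) % 2 ∧
      posAux ℓ M t x = x - M ∧ posAux ℓ M (t+1) x = x - M) ∨
    (ℓ - x - (ℓ + M) % 2 ≤ t ∧ t < ℓ - x - (ℓ + M) % 2 + M ∧
      posAux ℓ M t x = x - M + (t - (ℓ - x - (ℓ + M) % 2)) ∧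
      posAux ℓ M (t+1) x = x - M + (t - (ℓ - x - (ℓ + M) % 2)) + 1) ∨
    (ℓ - x - (ℓ + M) % 2 + M ≤ t ∧ posAux ℓ M t x = x ∧ posAux ℓ M (t+1) x = x) := by
  set a := x - M + 1 - M % 2 with hadef
  set b := ℓ - x - (ℓ + M) % 2 with hbdef
  have e1 : posAux ℓ M t x = x - min M (t - a) + min M (t - b) := by
    unfold posAux; rw [if_neg h1, if_pos h3]
  have e2 : posAux ℓ M (t+1) x = x - min M ((t+1) - a) + min M ((t+1) - b) := by
    unfold posAux; rw [if_neg h1, if_pos h3]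
  have hab : a + M ≤ b := by omega
  rcases Nat.lt_or_ge t a with h | h
  · have m1 : min M (t - a) = 0 := by omega
    have m2 : min M (t + 1 - a) = 0 := by omega
    have m3 : min M (t - b) = 0 := by omega
    have m4 : min M (t + 1 - b) = 0 := by omega
    rw [m1, m3] at e1; rw [m2, m4] at e2
    left; exact ⟨h, by omega, by omega⟩
  rcases Nat.lt_or_ge t (a + M) with h' | h'
  · have m1 : min M (t - a) = t - a := by omega
    have m2 : min M (t + 1 - a) = t + 1 - a := by omega
    have m3 : min M (t - b) = 0 := by omega
    have m4 : min M (t + 1 - b) = 0 := by omega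
    rw [m1, m3] at e1; rw [m2, m4] at e2
    right; left; exact ⟨h, h', by omega, by omega⟩
  rcases Nat.lt_or_ge t b with h'' | h''
  · have m1 : min M (t - a) = M := by omega
    have m2 : min M (t + 1 - a) = M := by omega
    have m3 : min M (t - b) = 0 := by omega
    have m4 : min M (t + 1 - b) = 0 := by omega
    rw [m1, m3] at e1; rw [m2, m4] at e2
    right; right; left; exact ⟨h', h'', by omega, by omega⟩
  rcases Nat.lt_or_ge t (b + M) with h3' | h3'
  · have m1 : min M (t - a) = M := by omega
    have m2 : min M (t + 1 - a) = M := by omega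
    have m3 : min M (t - b) = t - b := by omega
    have m4 : min M (t + 1 - b) = t + 1 - b := by omega
    rw [m1, m3] at e1; rw [m2, m4] at e2
    right; right; right; left; exact ⟨h'', h3', by omega, by omega⟩
  · have m1 : min M (t - a) = M := by omega
    have m2 : min M (t + 1 - a) = M := by omega
    have m3 : min M (t - b) = M := by omega
    have m4 : min M (t + 1 - b) = M := by omega
    rw [m1, m3] at e1; rw [m2, m4] at e2
    right; right; right; right; exact ⟨h3', by omega, by omega⟩

theorem spec_midright (ℓ M t x : ℕ) (hM : 1 ≤ M) (hℓ : 2 * M ≤ ℓ) (hx : x < ℓ) (ht : t < ℓ)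
    (h1 : ¬(x < M ∨ ℓ - M ≤ x)) (h3 : ¬(2 * x + 2 ≤ ℓ + M % 2)) :
    (t < ℓ - M - x - (ℓ + M) % 2 ∧ posAux ℓ M t x = x ∧ posAux ℓ M (t+1) x = x) ∨
    (ℓ - M - x - (ℓ + M) % 2 ≤ t ∧ t < ℓ - M - x - (ℓ + M) % 2 + M ∧
      posAux ℓ M t x = x + (t - (ℓ - M - x - (ℓ + M) % 2)) ∧
      posAux ℓ M (t+1) x = x + (t - (ℓ - M - x - (ℓ + M) % 2)) + 1) ∨
    (ℓ - M - x - (ℓ + M) % 2 + M ≤ t ∧ t < x + 1 - M % 2 ∧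
      posAux ℓ M t x = x + M ∧ posAux ℓ M (t+1) x = x + M) ∨
    (x + 1 - M % 2 ≤ t ∧ t < x + 1 - M % 2 + M ∧
      posAux ℓ M t x = x + M - (t - (x + 1 - M % 2)) ∧
      posAux ℓ M (t+1) x = x + M - (t - (x + 1 - M % 2)) - 1) ∨
    (x + 1 - M % 2 + M ≤ t ∧ posAux ℓ M t x = x ∧ posAux ℓ M (t+1) x = x) := by
  set a := ℓ - M - x - (ℓ + M) % 2 with hadef
  set b := x + 1 - M % 2 with hbdef
  have e1 : posAux ℓ M t x = x + min M (t - a) - min M (t - b) := by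
    unfold posAux; rw [if_neg h1, if_neg h3]
  have e2 : posAux ℓ M (t+1) x = x + min M ((t+1) - a) - min M ((t+1) - b) := by
    unfold posAux; rw [if_neg h1, if_neg h3]
  have hab : a + M ≤ b := by omega
  rcases Nat.lt_or_ge t a with h | h
  · have m1 : min M (t - a) = 0 := by omega
    have m2 : min M (t + 1 - a) = 0 := by omega
    have m3 : min M (t - b) = 0 := by omega
    have m4 : min M (t + 1 - b) = 0 := by omega
    rw [m1, m3] at e1; rw [m2, m4] at e2
    left; exact ⟨h, by omega, by omega⟩
  rcases Nat.lt_or_ge t (a + M) with h' | h'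
  · have m1 : min M (t - a) = t - a := by omega
    have m2 : min M (t + 1 - a) = t + 1 - a := by omega
    have m3 : min M (t - b) = 0 := by omega
    have m4 : min M (t + 1 - b) = 0 := by omega
    rw [m1, m3] at e1; rw [m2, m4] at e2
    right; left; exact ⟨h, h', by omega, by omega⟩
  rcases Nat.lt_or_ge t b with h'' | h''
  · have m1 : min M (t - a) = M := by omega
    have m2 : min M (t + 1 - a) = M := by omega
    have m3 : min M (t - b) = 0 := by omega
    have m4 : min M (t + 1 - b) = 0 := by omega
    rw [m1, m3] at e1; rw [m2, m4] at e2
    right; right; left; exact ⟨h', h'', by omega, by omega⟩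
  rcases Nat.lt_or_ge t (b + M) with h3' | h3'
  · have m1 : min M (t - a) = M := by omega
    have m2 : min M (t + 1 - a) = M := by omega
    have m3 : min M (t - b) = t - b := by omega
    have m4 : min M (t + 1 - b) = t + 1 - b := by omega
    rw [m1, m3] at e1; rw [m2, m4] at e2
    right; right; right; left; exact ⟨h'', h3', by omega, by omega⟩
  · have m1 : min M (t - a) = M := by omega
    have m2 : min M (t + 1 - a) = M := by omega
    have m3 : min M (t - b) = M := by omega
    have m4 : min M (t + 1 - b) = M := by omega
    rw [m1, m3] at e1; rw [m2, m4] at e2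
    right; right; right; right; exact ⟨h3', by omega, by omega⟩

theorem spec_even (ℓ M t x : ℕ) (hM : 1 ≤ M) (hℓ : 2 * M ≤ ℓ) (hx : x < ℓ) (ht : t < ℓ)
    (h1 : x < M ∨ ℓ - M ≤ x) (h2 : x % 2 = 0) :
    (x + t + 1 < ℓ ∧ posAux ℓ M t x = x + t ∧ posAux ℓ M (t+1) x = x + t + 1) ∨
    (x + t + 1 = ℓ ∧ posAux ℓ M t x = ℓ - 1 ∧ posAux ℓ M (t+1) x = ℓ - 1) ∨
    (ℓ ≤ x + t ∧ posAux ℓ M t x = 2 * ℓ - 1 - (x + t) ∧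
      posAux ℓ M (t+1) x = 2 * ℓ - 2 - (x + t)) := by
  have e1 : posAux ℓ M t x = min (x + t) (2 * ℓ - 1 - (x + t)) := by
    unfold posAux; rw [if_pos h1, if_pos h2]
  have e2 : posAux ℓ M (t+1) x = min (x + (t+1)) (2 * ℓ - 1 - (x + (t+1))) := by
    unfold posAux; rw [if_pos h1, if_pos h2]
  omega

theorem spec_odd (ℓ M t x : ℕ) (hM : 1 ≤ M) (hℓ : 2 * M ≤ ℓ) (hx : x < ℓ) (ht : t < ℓ)
    (h1 : x < M ∨ ℓ - M ≤ x) (h2 : ¬(x % 2 = 0)) :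
    (t < x ∧ posAux ℓ M t x = x - t ∧ posAux ℓ M (t+1) x = x - t - 1) ∨
    (t = x ∧ posAux ℓ M t x = 0 ∧ posAux ℓ M (t+1) x = 0) ∨
    (x < t ∧ posAux ℓ M t x = t - x - 1 ∧ posAux ℓ M (t+1) x = t - x) := by
  have e1 : posAux ℓ M t x = max (x - t) (t - x - 1) := by
    unfold posAux; rw [if_pos h1, if_neg h2]
  have e2 : posAux ℓ M (t+1) x = max (x - (t+1)) ((t+1) - x - 1) := by
    unfold posAux; rw [if_pos h1, if_neg h2]
  omega
set_option maxHeartbeats 2000000 in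
theorem posAux_lt (ℓ M t x : ℕ) (hM : 1 ≤ M) (hℓ : 2 * M ≤ ℓ) (hx : x < ℓ) (ht : t ≤ ℓ) :
    posAux ℓ M t x < ℓ := by
  unfold posAux; split_ifs <;> omega

set_option maxHeartbeats 2000000 in
theorem posAux_zero (ℓ M x : ℕ) (hM : 1 ≤ M) (hℓ : 2 * M ≤ ℓ) (hx : x < ℓ) :
    posAux ℓ M 0 x = x := by
  unfold posAux; split_ifs <;> omega

set_option maxHeartbeats 2000000 in
theorem posAux_final (ℓ M x : ℕ) (hM : 1 ≤ M) (hℓ : 2 * M ≤ ℓ) (hx : x < ℓ) :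
    posAux ℓ M ℓ x = if x < M ∨ ℓ - M ≤ x then ℓ - 1 - x else x := by
  unfold posAux; split_ifs <;> omega

def PQspec (ℓ M t x P Q : ℕ) : Prop :=
  ((x < M ∨ ℓ - M ≤ x) ∧ x % 2 = 0 ∧
    ((x + t + 1 < ℓ ∧ P = x + t ∧ Q = x + t + 1) ∨
     (x + t + 1 = ℓ ∧ P = ℓ - 1 ∧ Q = ℓ - 1) ∨
     (ℓ ≤ x + t ∧ P = 2 * ℓ - 1 - (x + t) ∧ Q = 2 * ℓ - 2 - (x + t)))) ∨
  ((x < M ∨ ℓ - M ≤ x) ∧ x % 2 = 1 ∧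
    ((t < x ∧ P = x - t ∧ Q = x - t - 1) ∨
     (t = x ∧ P = 0 ∧ Q = 0) ∨
     (x < t ∧ P = t - x - 1 ∧ Q = t - x))) ∨
  (M ≤ x ∧ x + M < ℓ ∧ 2 * x + 2 ≤ ℓ + M % 2 ∧
    ((t < x - M + 1 - M % 2 ∧ P = x ∧ Q = x) ∨
     (x - M + 1 - M % 2 ≤ t ∧ t < x - M + 1 - M % 2 + M ∧
       P = x - (t - (x - M + 1 - M % 2)) ∧ Q = x - (t - (x - M + 1 - M % 2)) - 1) ∨
     (x - M + 1 - M % 2 + M ≤ t ∧ t < ℓ - x - (ℓ + M) % 2 ∧ P = x - M ∧ Q = x - M) ∨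
     (ℓ - x - (ℓ + M) % 2 ≤ t ∧ t < ℓ - x - (ℓ + M) % 2 + M ∧
       P = x - M + (t - (ℓ - x - (ℓ + M) % 2)) ∧ Q = x - M + (t - (ℓ - x - (ℓ + M) % 2)) + 1) ∨
     (ℓ - x - (ℓ + M) % 2 + M ≤ t ∧ P = x ∧ Q = x))) ∨
  (M ≤ x ∧ x + M < ℓ ∧ ℓ + M % 2 < 2 * x + 2 ∧
    ((t < ℓ - M - x - (ℓ + M) % 2 ∧ P = x ∧ Q = x) ∨
     (ℓ - M - x - (ℓ + M) % 2 ≤ t ∧ t < ℓ - M - x - (ℓ + M) % 2 + M ∧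
       P = x + (t - (ℓ - M - x - (ℓ + M) % 2)) ∧ Q = x + (t - (ℓ - M - x - (ℓ + M) % 2)) + 1) ∨
     (ℓ - M - x - (ℓ + M) % 2 + M ≤ t ∧ t < x + 1 - M % 2 ∧ P = x + M ∧ Q = x + M) ∨
     (x + 1 - M % 2 ≤ t ∧ t < x + 1 - M % 2 + M ∧
       P = x + M - (t - (x + 1 - M % 2)) ∧ Q = x + M - (t - (x + 1 - M % 2)) - 1) ∨
     (x + 1 - M % 2 + M ≤ t ∧ P = x ∧ Q = x)))

theorem posAux_cases (ℓ M t x : ℕ) (hM : 1 ≤ M) (hℓ : 2 * M ≤ ℓ) (hx : x < ℓ) (ht : t < ℓ) :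
    PQspec ℓ M t x (posAux ℓ M t x) (posAux ℓ M (t+1) x) := by
  unfold PQspec
  by_cases h1 : x < M ∨ ℓ - M ≤ x
  · by_cases h2 : x % 2 = 0
    · exact Or.inl ⟨h1, h2, spec_even ℓ M t x hM hℓ hx ht h1 h2⟩
    · exact Or.inr (Or.inl ⟨h1, by omega, spec_odd ℓ M t x hM hℓ hx ht h1 h2⟩)
  · by_cases h3 : 2 * x + 2 ≤ ℓ + M % 2
    · exact Or.inr (Or.inr (Or.inl ⟨by omega, by omega, h3,
        spec_midleft ℓ M t x hM hℓ hx ht h1 h3⟩))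
    · exact Or.inr (Or.inr (Or.inr ⟨by omega, by omega, by omega,
        spec_midright ℓ M t x hM hℓ hx ht h1 h3⟩))

set_option maxHeartbeats 8000000 in
theorem posAux_lip (ℓ M t x : ℕ) (hM : 1 ≤ M) (hℓ : 2 * M ≤ ℓ) (hx : x < ℓ) (ht : t < ℓ) :
    posAux ℓ M (t+1) x = posAux ℓ M t x + 1 ∨ posAux ℓ M (t+1) x = posAux ℓ M t x ∨
      posAux ℓ M t x = posAux ℓ M (t+1) x + 1 := by
  have Hx := posAux_cases ℓ M t x hM hℓ hx ht
  unfold PQspec at Hx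
  rcases Hx with Hx|Hx|Hx|Hx <;> omega

set_option maxHeartbeats 8000000 in
theorem posAux_D (ℓ M t x y : ℕ) (hM : 1 ≤ M) (hℓ : 2 * M ≤ ℓ) (hx : x < ℓ) (hy : y < ℓ)
    (ht : t < ℓ) (h1 : posAux ℓ M (t+1) x = posAux ℓ M t x + 1)
    (h2 : posAux ℓ M t y = posAux ℓ M t x + 1) :
    posAux ℓ M (t+1) y = posAux ℓ M t x := by
  have Hx := posAux_cases ℓ M t x hM hℓ hx ht
  have Hy := posAux_cases ℓ M t y hM hℓ hy ht
  unfold PQspec at Hx Hy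
  rcases Hx with Hx|Hx|Hx|Hx <;> rcases Hy with Hy|Hy|Hy|Hy <;> omega

set_option maxHeartbeats 8000000 in
theorem posAux_D' (ℓ M t x y : ℕ) (hM : 1 ≤ M) (hℓ : 2 * M ≤ ℓ) (hx : x < ℓ) (hy : y < ℓ)
    (ht : t < ℓ) (h1 : posAux ℓ M t x = posAux ℓ M (t+1) x + 1)
    (h2 : posAux ℓ M t x = posAux ℓ M t y + 1) :
    posAux ℓ M (t+1) y = posAux ℓ M t x := by
  have Hx := posAux_cases ℓ M t x hM hℓ hx ht
  have Hy := posAux_cases ℓ M t y hM hℓ hy ht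
  unfold PQspec at Hx Hy
  rcases Hx with Hx|Hx|Hx|Hx <;> rcases Hy with Hy|Hy|Hy|Hy <;> omega

set_option maxHeartbeats 8000000 in
theorem posAux_ord (ℓ M t x y : ℕ) (hM : 1 ≤ M) (hℓ : 2 * M ≤ ℓ) (ht : t < ℓ)
    (hx : M ≤ x) (hxy : x < y) (hy : y < ℓ - M) :
    posAux ℓ M t x < posAux ℓ M t y ∧ posAux ℓ M (t+1) x < posAux ℓ M (t+1) y := by
  have Hx := posAux_cases ℓ M t x hM hℓ (by omega) ht
  have Hy := posAux_cases ℓ M t y hM hℓ (by omega) ht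
  unfold PQspec at Hx Hy
  rcases Hx with Hx|Hx|Hx|Hx <;> rcases Hy with Hy|Hy|Hy|Hy <;> omega

def Pfin (ℓ M : ℕ) (hM : 1 ≤ M) (hℓ : 2 * M ≤ ℓ) (t : ℕ) (x : Fin ℓ) : Fin ℓ :=
  ⟨posAux ℓ M (min t ℓ) x.1, posAux_lt ℓ M (min t ℓ) x.1 hM hℓ x.2 (min_le_right t ℓ)⟩

theorem Pfin_val (ℓ M : ℕ) (hM : 1 ≤ M) (hℓ : 2 * M ≤ ℓ) (t : ℕ) (ht : t ≤ ℓ) (x : Fin ℓ) :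
    (Pfin ℓ M hM hℓ t x).1 = posAux ℓ M t x.1 := by
  simp [Pfin, Nat.min_eq_left ht]

theorem Pfin_inj (ℓ M : ℕ) (hM : 1 ≤ M) (hℓ : 2 * M ≤ ℓ) (t : ℕ) :
    Function.Injective (Pfin ℓ M hM hℓ t) := by
  induction t with
  | zero =>
    intro x y h
    have h' := congrArg Fin.val h
    rw [Pfin_val ℓ M hM hℓ 0 (by omega) x, Pfin_val ℓ M hM hℓ 0 (by omega) y,
      posAux_zero ℓ M x.1 hM hℓ x.2, posAux_zero ℓ M y.1 hM hℓ y.2] at h'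
    exact Fin.ext h'
  | succ t ih =>
    rcases Nat.lt_or_ge t ℓ with htℓ | htℓ
    · have key : ∀ u v : Fin ℓ, posAux ℓ M t u.1 < posAux ℓ M t v.1 →
          posAux ℓ M (t+1) u.1 = posAux ℓ M (t+1) v.1 → False := by
        intro u v hlt heq
        have lipu := posAux_lip ℓ M t u.1 hM hℓ u.2 htℓ
        have lipv := posAux_lip ℓ M t v.1 hM hℓ v.2 htℓ
        rcases Nat.lt_or_ge (posAux ℓ M t u.1 + 1) (posAux ℓ M t v.1) with hgap | hadj
        · have hu : posAux ℓ M (t+1) u.1 = posAux ℓ M t u.1 + 1 := by omega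
          have hv : posAux ℓ M t v.1 = posAux ℓ M (t+1) v.1 + 1 := by omega
          have hsurj : Function.Surjective (Pfin ℓ M hM hℓ t) :=
            Finite.injective_iff_surjective.mp ih
          have hvlt : posAux ℓ M t v.1 < ℓ := posAux_lt ℓ M t v.1 hM hℓ v.2 (by omega)
          obtain ⟨z, hz⟩ := hsurj ⟨posAux ℓ M t u.1 + 1, by omega⟩
          have hzval : posAux ℓ M t z.1 = posAux ℓ M t u.1 + 1 := by
            have h' := congrArg Fin.val hz
            rwa [Pfin_val ℓ M hM hℓ t (by omega) z] at h'
          have h₁ := posAux_D ℓ M t u.1 z.1 hM hℓ u.2 z.2 htℓ hu hzval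
          have h₂ := posAux_D' ℓ M t v.1 z.1 hM hℓ v.2 z.2 htℓ hv (by omega)
          omega
        · have hadj' : posAux ℓ M t v.1 = posAux ℓ M t u.1 + 1 := by omega
          rcases lipu with hu | hu | hu
          · have := posAux_D ℓ M t u.1 v.1 hM hℓ u.2 v.2 htℓ hu hadj'; omega
          · have hv : posAux ℓ M t v.1 = posAux ℓ M (t+1) v.1 + 1 := by omega
            have := posAux_D' ℓ M t v.1 u.1 hM hℓ v.2 u.2 htℓ hv (by omega)
            omega
          · omega
      intro x y h
      have h' := congrArg Fin.val h
      rw [Pfin_val ℓ M hM hℓ (t+1) (by omega) x, Pfin_val ℓ M hM hℓ (t+1) (by omega) y] at h'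
      by_contra hne
      have hne' : posAux ℓ M t x.1 ≠ posAux ℓ M t y.1 := by
        intro hh
        exact hne (ih (Fin.ext (by
          rw [Pfin_val ℓ M hM hℓ t (by omega) x, Pfin_val ℓ M hM hℓ t (by omega) y]; exact hh)))
      rcases Nat.lt_or_ge (posAux ℓ M t x.1) (posAux ℓ M t y.1) with hc | hc
      · exact key x y hc h'
      · exact key y x (by omega) h'.symm
    · have heq : Pfin ℓ M hM hℓ (t+1) = Pfin ℓ M hM hℓ t := by
        funext x; apply Fin.ext
        simp only [Pfin]
        congr 1
        omega
      rw [heq]; exact ih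

noncomputable def Eperm (ℓ M : ℕ) (hM : 1 ≤ M) (hℓ : 2 * M ≤ ℓ) (t : ℕ) : Equiv.Perm (Fin ℓ) :=
  Equiv.ofBijective _ (Finite.injective_iff_bijective.mp (Pfin_inj ℓ M hM hℓ t))

theorem Eperm_apply (ℓ M : ℕ) (hM : 1 ≤ M) (hℓ : 2 * M ≤ ℓ) (t : ℕ) (x : Fin ℓ) :
    Eperm ℓ M hM hℓ t x = Pfin ℓ M hM hℓ t x := rfl

noncomputable def tau (ℓ M : ℕ) (hM : 1 ≤ M) (hℓ : 2 * M ≤ ℓ) (t : ℕ) : Equiv.Perm (Fin ℓ) :=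
  Eperm ℓ M hM hℓ (t+1) * (Eperm ℓ M hM hℓ t)⁻¹

theorem tau_apply (ℓ M : ℕ) (hM : 1 ≤ M) (hℓ : 2 * M ≤ ℓ) (t : ℕ) (x : Fin ℓ) :
    tau ℓ M hM hℓ t (Eperm ℓ M hM hℓ t x) = Eperm ℓ M hM hℓ (t+1) x := by
  simp [tau]

theorem tau_adj (ℓ M : ℕ) (hM : 1 ≤ M) (hℓ : 2 * M ≤ ℓ) (t : ℕ) (ht : t < ℓ) :
    IsSimulAdjSwaps (tau ℓ M hM hℓ t) := by
  intro q
  set x := (Eperm ℓ M hM hℓ t)⁻¹ q with hxdef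
  have hq : Eperm ℓ M hM hℓ t x = q := Equiv.apply_symm_apply _ q
  have hqv : q.1 = posAux ℓ M t x.1 := by
    rw [← hq, Eperm_apply, Pfin_val ℓ M hM hℓ t (by omega)]
  have htq : tau ℓ M hM hℓ t q = Eperm ℓ M hM hℓ (t+1) x := by
    rw [← hq, tau_apply]
  have htqv : (tau ℓ M hM hℓ t q).1 = posAux ℓ M (t+1) x.1 := by
    rw [htq, Eperm_apply, Pfin_val ℓ M hM hℓ (t+1) (by omega)]
  have lip := posAux_lip ℓ M t x.1 hM hℓ x.2 ht
  have hlt1 : posAux ℓ M (t+1) x.1 < ℓ := posAux_lt ℓ M (t+1) x.1 hM hℓ x.2 (by omega)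
  rcases lip with hup | heq | hdn
  · -- x moves up
    have hq1 : q.1 + 1 < ℓ := by omega
    set q' : Fin ℓ := ⟨q.1 + 1, hq1⟩ with hq'def
    have h1 : tau ℓ M hM hℓ t q = q' := Fin.ext (by rw [htqv]; simp [hq'def]; omega)
    set y := (Eperm ℓ M hM hℓ t)⁻¹ q' with hydef
    have hy : Eperm ℓ M hM hℓ t y = q' := Equiv.apply_symm_apply _ q'
    have hyv : posAux ℓ M t y.1 = posAux ℓ M t x.1 + 1 := by
      have h' := congrArg Fin.val hy
      rw [Eperm_apply, Pfin_val ℓ M hM hℓ t (by omega)] at h'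
      simp [hq'def] at h'; omega
    have hD := posAux_D ℓ M t x.1 y.1 hM hℓ x.2 y.2 ht hup hyv
    have h2 : tau ℓ M hM hℓ t q' = q := by
      have := tau_apply ℓ M hM hℓ t y
      rw [hy] at this
      rw [this]
      apply Fin.ext
      rw [Eperm_apply, Pfin_val ℓ M hM hℓ (t+1) (by omega)]
      omega
    refine ⟨by rw [h1, h2], Or.inr (Or.inl ?_)⟩
    rw [h1]
  · -- stays
    have hqq : tau ℓ M hM hℓ t q = q := Fin.ext (by omega)
    exact ⟨by rw [hqq, hqq], Or.inl hqq⟩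
  · -- moves down
    set q' : Fin ℓ := ⟨posAux ℓ M (t+1) x.1, hlt1⟩ with hq'def
    have h1 : tau ℓ M hM hℓ t q = q' := Fin.ext (by rw [htqv])
    set y := (Eperm ℓ M hM hℓ t)⁻¹ q' with hydef
    have hy : Eperm ℓ M hM hℓ t y = q' := Equiv.apply_symm_apply _ q'
    have hyv : posAux ℓ M t y.1 = posAux ℓ M (t+1) x.1 := by
      have h' := congrArg Fin.val hy
      rw [Eperm_apply, Pfin_val ℓ M hM hℓ t (by omega)] at h'
      simpa [hq'def] using h'
    have hD := posAux_D' ℓ M t x.1 y.1 hM hℓ x.2 y.2 ht hdn (by omega)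
    have h2 : tau ℓ M hM hℓ t q' = q := by
      have := tau_apply ℓ M hM hℓ t y
      rw [hy] at this
      rw [this]
      apply Fin.ext
      rw [Eperm_apply, Pfin_val ℓ M hM hℓ (t+1) (by omega)]
      omega
    refine ⟨by rw [h1, h2], Or.inr (Or.inr ?_)⟩
    rw [h1]
    have hq'v : (q' : ℕ) = posAux ℓ M (t+1) x.1 := rfl
    omega

theorem swapCount_tau (ℓ M : ℕ) (hM : 1 ≤ M) (hℓ : 2 * M ≤ ℓ) (t : ℕ) (ht : t < ℓ) :
    swapCount (tau ℓ M hM hℓ t) ≤ 2 * M := by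
  classical
  have himg : (Finset.univ.filter fun q => tau ℓ M hM hℓ t q ≠ q)
      = (Finset.univ.filter
          (fun x : Fin ℓ => Pfin ℓ M hM hℓ (t+1) x ≠ Pfin ℓ M hM hℓ t x)).image
          (Eperm ℓ M hM hℓ t) := by
    ext q
    simp only [Finset.mem_filter, Finset.mem_univ, true_and, Finset.mem_image]
    constructor
    · intro hq
      refine ⟨(Eperm ℓ M hM hℓ t)⁻¹ q, ?_, Equiv.apply_symm_apply _ q⟩
      intro hc
      apply hq
      have hinv : Eperm ℓ M hM hℓ t ((Eperm ℓ M hM hℓ t)⁻¹ q) = q :=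
        Equiv.apply_symm_apply _ q
      calc tau ℓ M hM hℓ t q
          = Eperm ℓ M hM hℓ (t+1) ((Eperm ℓ M hM hℓ t)⁻¹ q) := by rw [← hinv, tau_apply, hinv]
        _ = Pfin ℓ M hM hℓ (t+1) ((Eperm ℓ M hM hℓ t)⁻¹ q) := rfl
        _ = Pfin ℓ M hM hℓ t ((Eperm ℓ M hM hℓ t)⁻¹ q) := hc
        _ = q := hinv
    · rintro ⟨x, hx, rfl⟩
      rw [tau_apply]
      intro hc
      exact hx hc
  have hcards : (Finset.univ.filter fun q => tau ℓ M hM hℓ t q ≠ q).card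
      = (Finset.univ.filter
          (fun x : Fin ℓ => Pfin ℓ M hM hℓ (t+1) x ≠ Pfin ℓ M hM hℓ t x)).card := by
    rw [himg, Finset.card_image_of_injective _ (Equiv.injective _)]
  have hLab : (Finset.univ.filter (fun x : Fin ℓ => x.1 < M ∨ ℓ - M ≤ x.1)).card ≤ 2 * M := by
    have h := Finset.card_le_card_of_injOn
      (s := Finset.univ.filter (fun x : Fin ℓ => x.1 < M ∨ ℓ - M ≤ x.1))
      (f := fun x : Fin ℓ => if x.1 < M then x.1 else x.1 - (ℓ - M) + M)
      (t := Finset.range (2*M)) ?_ ?_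
    · simpa using h
    · intro x hx
      simp only [Finset.mem_coe, Finset.mem_filter, Finset.mem_univ, true_and] at hx
      have hx2 := x.isLt
      simp only [Finset.mem_coe, Finset.mem_range]
      split_ifs <;> omega
    · intro a ha b hb hab
      simp only [Finset.mem_coe, Finset.mem_filter, Finset.mem_univ, true_and] at ha hb
      simp only at hab
      have ha2 := a.isLt; have hb2 := b.isLt
      apply Fin.ext
      split_ifs at hab <;> omega
  have hXmid : ((Finset.univ.filter
        (fun x : Fin ℓ => Pfin ℓ M hM hℓ (t+1) x ≠ Pfin ℓ M hM hℓ t x)).filter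
        (fun x => M ≤ x.1 ∧ x.1 < ℓ - M)).card
      ≤ (Finset.univ.filter (fun x : Fin ℓ => x.1 < M ∨ ℓ - M ≤ x.1)).card := by
    apply Finset.card_le_card_of_injOn
      (f := fun x => (Eperm ℓ M hM hℓ t)⁻¹ (Pfin ℓ M hM hℓ (t+1) x))
    · intro x hx
      simp only [Finset.mem_coe, Finset.mem_filter, Finset.mem_univ, true_and] at hx
      obtain ⟨hmove, hmid⟩ := hx
      have hz : Eperm ℓ M hM hℓ t ((Eperm ℓ M hM hℓ t)⁻¹ (Pfin ℓ M hM hℓ (t+1) x))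
          = Pfin ℓ M hM hℓ (t+1) x := Equiv.apply_symm_apply _ _
      have hzv : posAux ℓ M t ((Eperm ℓ M hM hℓ t)⁻¹ (Pfin ℓ M hM hℓ (t+1) x)).1
          = posAux ℓ M (t+1) x.1 := by
        have h' := congrArg Fin.val hz
        rw [Eperm_apply, Pfin_val ℓ M hM hℓ t (by omega),
          Pfin_val ℓ M hM hℓ (t+1) (by omega)] at h'
        exact h'
      have hmv : posAux ℓ M (t+1) x.1 ≠ posAux ℓ M t x.1 := by
        intro hc
        exact hmove (Fin.ext (by
          rw [Pfin_val ℓ M hM hℓ (t+1) (by omega), Pfin_val ℓ M hM hℓ t (by omega)]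
          exact hc))
      set z := (Eperm ℓ M hM hℓ t)⁻¹ (Pfin ℓ M hM hℓ (t+1) x) with hzdef
      have lip := posAux_lip ℓ M t x.1 hM hℓ x.2 ht
      have hznotmid : ¬ (M ≤ z.1 ∧ z.1 < ℓ - M) := by
        intro hzz
        have hne : z.1 ≠ x.1 := by
          intro hc; rw [hc] at hzv; omega
        rcases Nat.lt_or_ge x.1 z.1 with hcc | hcc
        · have hord := posAux_ord ℓ M t x.1 z.1 hM hℓ ht hmid.1 hcc hzz.2
          rcases lip with hup | hst | hdn
          · have hD := posAux_D ℓ M t x.1 z.1 hM hℓ x.2 z.2 ht hup (by omega)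
            omega
          · omega
          · omega
        · have hcc' : z.1 < x.1 := by omega
          have hord := posAux_ord ℓ M t z.1 x.1 hM hℓ ht hzz.1 hcc' hmid.2
          rcases lip with hup | hst | hdn
          · omega
          · omega
          · have hD := posAux_D' ℓ M t x.1 z.1 hM hℓ x.2 z.2 ht hdn (by omega)
            omega
      simp only [Finset.mem_coe, Finset.mem_filter, Finset.mem_univ, true_and]
      have hzlt := z.isLt
      omega
    · intro a ha b hb hab
      simp only at hab
      exact Pfin_inj ℓ M hM hℓ (t+1) ((Equiv.injective _) hab)
  have hXsub : (Finset.univ.filter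
        (fun x : Fin ℓ => Pfin ℓ M hM hℓ (t+1) x ≠ Pfin ℓ M hM hℓ t x))
      ⊆ (Finset.univ.filter (fun x : Fin ℓ => x.1 < M ∨ ℓ - M ≤ x.1))
        ∪ ((Finset.univ.filter
            (fun x : Fin ℓ => Pfin ℓ M hM hℓ (t+1) x ≠ Pfin ℓ M hM hℓ t x)).filter
            (fun x => M ≤ x.1 ∧ x.1 < ℓ - M)) := by
    intro x hx
    by_cases hmid : M ≤ x.1 ∧ x.1 < ℓ - M
    · exact Finset.mem_union_right _ (Finset.mem_filter.mpr ⟨hx, hmid⟩)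
    · apply Finset.mem_union_left
      simp only [Finset.mem_filter, Finset.mem_univ, true_and]
      have hx2 := x.isLt
      omega
  have h1 := Finset.card_le_card hXsub
  have h2 := Finset.card_union_le
    (Finset.univ.filter (fun x : Fin ℓ => x.1 < M ∨ ℓ - M ≤ x.1))
    ((Finset.univ.filter
        (fun x : Fin ℓ => Pfin ℓ M hM hℓ (t+1) x ≠ Pfin ℓ M hM hℓ t x)).filter
        (fun x => M ≤ x.1 ∧ x.1 < ℓ - M))
  unfold swapCount
  rw [hcards]
  omega

theorem Eperm_zero (ℓ M : ℕ) (hM : 1 ≤ M) (hℓ : 2 * M ≤ ℓ) : Eperm ℓ M hM hℓ 0 = 1 := by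
  apply Equiv.ext
  intro x
  apply Fin.ext
  rw [Eperm_apply, Pfin_val ℓ M hM hℓ 0 (by omega), posAux_zero ℓ M x.1 hM hℓ x.2]
  rfl

theorem prod_tau (ℓ M : ℕ) (hM : 1 ≤ M) (hℓ : 2 * M ≤ ℓ) (k : ℕ) :
    (((List.range k).map (tau ℓ M hM hℓ)).reverse).prod = Eperm ℓ M hM hℓ k := by
  induction k with
  | zero => simpa using (Eperm_zero ℓ M hM hℓ).symm
  | succ k ih =>
    rw [List.range_succ, List.map_append, List.reverse_append]
    simp only [List.map_cons, List.map_nil, List.reverse_cons, List.reverse_nil,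
      List.nil_append, List.singleton_append, List.prod_cons, ih]
    unfold tau
    group


/-- The permutation of an array of `ℓ` cubes exchanging (and reversing) the first and last
blocks of `M` cubes while fixing the middle can be realized by a sequence of S-elementary
movements of total Shnirelman cost at most `√2 · ℓ · √M · N^{-1-ν/2}`. -/
theorem stmt11 (ν N ℓ M : ℕ) (hN : 0 < N) (hM : 1 ≤ M) (hℓ : 2 * M ≤ ℓ)
    (σ : Equiv.Perm (Fin ℓ))
    (hσ1 : ∀ i : Fin ℓ, ((i : ℕ) < M ∨ ℓ - M ≤ (i : ℕ)) → (σ i : ℕ) = ℓ - 1 - (i : ℕ))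
    (hσ2 : ∀ i : Fin ℓ, M ≤ (i : ℕ) → (i : ℕ) < ℓ - M → σ i = i) :
    ∃ L : List (Equiv.Perm (Fin ℓ)),
      (∀ τ ∈ L, IsSimulAdjSwaps τ) ∧ L.prod = σ ∧
      (L.map fun τ => (N : ℝ) ^ (-1 - (ν : ℝ) / 2) * Real.sqrt (swapCount τ)).sum
        ≤ Real.sqrt 2 * (ℓ : ℝ) * Real.sqrt M * (N : ℝ) ^ (-1 - (ν : ℝ) / 2) := by
  refine ⟨((List.range ℓ).map (tau ℓ M hM hℓ)).reverse, ?_, ?_, ?_⟩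
  · intro τ hτ
    rw [List.mem_reverse, List.mem_map] at hτ
    obtain ⟨t, htmem, rfl⟩ := hτ
    exact tau_adj ℓ M hM hℓ t (List.mem_range.mp htmem)
  · rw [prod_tau]
    apply Equiv.ext
    intro x
    apply Fin.ext
    rw [Eperm_apply, Pfin_val ℓ M hM hℓ ℓ le_rfl, posAux_final ℓ M x.1 hM hℓ x.2]
    split_ifs with hc
    · exact (hσ1 x hc).symm
    · rw [hσ2 x (by omega) (by omega)]
  · set c := (N : ℝ) ^ (-1 - (ν : ℝ) / 2) with hcdef
    have hc0 : 0 ≤ c := Real.rpow_nonneg (by positivity) _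
    have hbound : ∀ r ∈ (((List.range ℓ).map (tau ℓ M hM hℓ)).reverse.map
        fun τ => c * Real.sqrt (swapCount τ)), r ≤ c * Real.sqrt (2 * M) := by
      intro r hr
      rw [List.mem_map] at hr
      obtain ⟨τ, hτ, rfl⟩ := hr
      rw [List.mem_reverse, List.mem_map] at hτ
      obtain ⟨t, htmem, rfl⟩ := hτ
      have hsc := swapCount_tau ℓ M hM hℓ t (List.mem_range.mp htmem)
      apply mul_le_mul_of_nonneg_left _ hc0
      apply Real.sqrt_le_sqrt
      exact_mod_cast hsc
    have hsum := List.sum_le_card_nsmul _ _ hbound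
    have hlen : (((List.range ℓ).map (tau ℓ M hM hℓ)).reverse.map
        fun τ => c * Real.sqrt (swapCount τ)).length = ℓ := by
      simp
    rw [hlen] at hsum
    refine le_trans hsum ?_
    rw [nsmul_eq_mul]
    rw [Real.sqrt_mul (by norm_num : (0:ℝ) ≤ 2)]
    have : (ℓ : ℝ) * (c * (Real.sqrt 2 * Real.sqrt M))
        = Real.sqrt 2 * (ℓ : ℝ) * Real.sqrt M * c := by ring
    rw [this]
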